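/- With the clipping consistency set C(y) as above, the squared distance satisfies (1/2) dist(x, C(y))² = (1/2)[ ‖M_r(y − x)‖₂² + ‖M_c⁺(y − x)₊‖₂² + ‖M_c⁻(y − x)₋‖₂² ], where (v)₊ = max(0, v) and (v)₋ = min(0, v) coordinatewise. -/

import Mathlib

/-- for the clipping consistency set `C(y)`, the squared distance is
`(1/2) dist(x, C(y))² = (1/2)[ ‖M_r(y − x)‖² + ‖M_c⁺(y − x)₊‖² + ‖M_c⁻(y − x)₋‖² ]`,
written with coordinatewise positive/negative parts over the reliable, positively
clipped and negatively clipped index sets. -/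
theorem stmt_12 (N : ℕ) (θp θm : ℝ) (hθ : θm < θp)
    (Ir Ip Im : Finset (Fin N))
    (hpart : ∀ i, (i ∈ Ir ∧ i ∉ Ip ∧ i ∉ Im) ∨ (i ∉ Ir ∧ i ∈ Ip ∧ i ∉ Im) ∨
      (i ∉ Ir ∧ i ∉ Ip ∧ i ∈ Im))
    (y : EuclideanSpace ℝ (Fin N))
    (hyp : ∀ i ∈ Ip, y i = θp) (hym : ∀ i ∈ Im, y i = θm)
    (C : Set (EuclideanSpace ℝ (Fin N)))
    (hC : C = {x : EuclideanSpace ℝ (Fin N) |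
      (∀ i ∈ Ir, x i = y i) ∧ (∀ i ∈ Ip, θp ≤ x i) ∧ (∀ i ∈ Im, x i ≤ θm)})
    (x : EuclideanSpace ℝ (Fin N)) :
    (1 / 2 : ℝ) * Metric.infDist x C ^ 2 =
      (1 / 2 : ℝ) * ((∑ i ∈ Ir, (y i - x i) ^ 2) +
        (∑ i ∈ Ip, (max (y i - x i) 0) ^ 2) +
        (∑ i ∈ Im, (min (y i - x i) 0) ^ 2)) := by
  classical
  set z : EuclideanSpace ℝ (Fin N) :=
    WithLp.toLp 2 (fun i => if i ∈ Ir then y i else if i ∈ Ip then max (x i) θp else min (x i) θm) with hz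
  have hzC : z ∈ C := by
    rw [hC]
    refine ⟨fun i hi => by simp [hz, hi], fun i hi => ?_, fun i hi => ?_⟩
    · rcases hpart i with ⟨_, h, _⟩ | ⟨h1, _, _⟩ | ⟨_, h, _⟩
      · exact absurd hi h
      · simp [hz, h1, hi]
      · exact absurd hi h
    · rcases hpart i with ⟨_, _, h⟩ | ⟨_, _, h⟩ | ⟨h1, h2, _⟩
      · exact absurd hi h
      · exact absurd hi h
      · simp [hz, h1, h2]
  -- squared dist formula
  have hdistsq : ∀ w : EuclideanSpace ℝ (Fin N),
      dist x w ^ 2 = ∑ i, (x i - w i) ^ 2 := by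
    intro w
    rw [EuclideanSpace.dist_eq, Real.sq_sqrt (by positivity)]
    congr 1; ext i; rw [Real.dist_eq, sq_abs]
  -- minimality
  have hmin : ∀ w ∈ C, dist x z ≤ dist x w := by
    intro w hw
    rw [hC] at hw
    obtain ⟨hwr, hwp, hwm⟩ := hw
    rw [EuclideanSpace.dist_eq, EuclideanSpace.dist_eq]
    apply Real.sqrt_le_sqrt
    apply Finset.sum_le_sum
    intro i _
    rw [Real.dist_eq, Real.dist_eq, sq_abs, sq_abs]
    rcases hpart i with ⟨h1, _, _⟩ | ⟨h1, h2, _⟩ | ⟨h1, h2, h3⟩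
    · simp [hz, h1, hwr i h1]
    · have hw' := hwp i h2
      simp only [hz, PiLp.toLp_apply, if_neg h1, if_pos h2]
      rcases le_total θp (x i) with h | h
      · simp [max_eq_left h]; positivity
      · rw [max_eq_right h]; nlinarith
    · have hw' := hwm i h3
      simp only [hz, PiLp.toLp_apply, if_neg h1, if_neg h2]
      rcases le_total (x i) θm with h | h
      · simp [min_eq_left h]; positivity
      · rw [min_eq_right h]; nlinarith
  have hinf : Metric.infDist x C = dist x z := by
    refine le_antisymm (Metric.infDist_le_dist_of_mem hzC) ?_
    by_contra h
    push_neg at h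
    obtain ⟨w, hw, hlt⟩ := (Metric.infDist_lt_iff ⟨z, hzC⟩).1 h
    exact absurd hlt (not_lt.2 (hmin w hw))
  rw [hinf, hdistsq]
  congr 1
  -- split the sum
  have hdisj1 : Disjoint Ir Ip := by
    rw [Finset.disjoint_left]; intro i hi hi'
    rcases hpart i with ⟨_, h, _⟩ | ⟨h, _, _⟩ | ⟨h, _, _⟩ <;> tauto
  have hdisj2 : Disjoint (Ir ∪ Ip) Im := by
    rw [Finset.disjoint_left]; intro i hi hi'
    rcases Finset.mem_union.1 hi with h | h <;>
      rcases hpart i with ⟨_, _, h'⟩ | ⟨_, _, h'⟩ | ⟨h1, h2, _⟩ <;> tauto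
  have huniv : Ir ∪ Ip ∪ Im = Finset.univ := by
    apply Finset.eq_univ_of_forall
    intro i
    rcases hpart i with ⟨h, _, _⟩ | ⟨_, h, _⟩ | ⟨_, _, h⟩ <;>
      simp [Finset.mem_union, h]
  rw [← huniv, Finset.sum_union hdisj2, Finset.sum_union hdisj1]
  congr 1
  congr 1
  · apply Finset.sum_congr rfl
    intro i hi
    simp only [hz, PiLp.toLp_apply, if_pos hi]; ring
  · apply Finset.sum_congr rfl
    intro i hi
    rcases hpart i with ⟨_, h, _⟩ | ⟨h1, _, _⟩ | ⟨_, h, _⟩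
    · exact absurd hi h
    · simp only [hz, PiLp.toLp_apply, if_neg h1, if_pos hi, hyp i hi]
      rcases le_total θp (x i) with h | h
      · rw [max_eq_left h, max_eq_right (by linarith)]; ring
      · rw [max_eq_right h, max_eq_left (by linarith)]; ring
    · exact absurd hi h
  · apply Finset.sum_congr rfl
    intro i hi
    rcases hpart i with ⟨_, _, h⟩ | ⟨_, _, h⟩ | ⟨h1, h2, _⟩
    · exact absurd hi h
    · exact absurd hi h
    · simp only [hz, PiLp.toLp_apply, if_neg h1, if_neg h2, hym i hi]
      rcases le_total (x i) θm with h | h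
      · rw [min_eq_left h, min_eq_right (by linarith)]; ring
      · rw [min_eq_right h, min_eq_left (by linarith)]; ring
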